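/- arXiv:1602.04361 — 2 statements merged into one kernel-verified Lean document; each statement's English description precedes it below -/
import Mathlib

section
/- Let k(x,y) = ∫₀^∞ e^{−t‖x−y‖²} dν(t) be a radial kernel on ℝ^d with ν a finite nonnegative Borel measure on [0,∞), and let θ_0, θ_1 be the kernel mean embeddings of Gaussian measures N(μ_0, σ²I) and N(μ_1, σ²I). Then ‖θ_0 − θ_1‖²_{H_k} = ∫₀^∞ 2 (1 + 4tσ²)^{−d/2} (1 − exp(−t‖μ_0 − μ_1‖² / (1 + 4tσ²))) dν(t). -/
open MeasureTheory

open Real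
open scoped ENNReal NNReal


lemma gauss1 {σ t : ℝ} (hσ : 0 < σ) (ht : 0 ≤ t) (a m : ℝ) :
    ∫ x : ℝ, Real.exp (-(t * (x - a) ^ 2)) *
      ((2 * Real.pi * σ ^ 2) ^ (-(1:ℝ) / 2) * Real.exp (-(x - m) ^ 2 / (2 * σ ^ 2)))
    = (1 + 2 * t * σ ^ 2) ^ (-(1:ℝ) / 2) *
        Real.exp (-(t * (a - m) ^ 2) / (1 + 2 * t * σ ^ 2)) := by
  have hσ2 : (0:ℝ) < σ ^ 2 := by positivity
  have hu : (0:ℝ) < 1 + 2 * t * σ ^ 2 := by positivity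
  set u : ℝ := 1 + 2 * t * σ ^ 2 with hu_def
  set c : ℝ := u / (2 * σ ^ 2) with hc_def
  have hc : 0 < c := by positivity
  set b : ℝ := (2 * t * σ ^ 2 * a + m) / u with hb_def
  set c₀ : ℝ := (2 * Real.pi * σ ^ 2) ^ (-(1:ℝ) / 2) with hc0_def
  have key : ∀ x : ℝ, Real.exp (-(t * (x - a) ^ 2)) *
      (c₀ * Real.exp (-(x - m) ^ 2 / (2 * σ ^ 2)))
      = (c₀ * Real.exp (-(t * (a - m) ^ 2) / u)) * Real.exp (-c * (x - b) ^ 2) := by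
    intro x
    rw [mul_left_comm, ← Real.exp_add, mul_assoc, ← Real.exp_add]
    congr 2
    rw [hc_def, hb_def, hu_def]
    field_simp
    ring
  simp_rw [key]
  rw [MeasureTheory.integral_const_mul,
    MeasureTheory.integral_sub_right_eq_self (fun x => Real.exp (-c * x ^ 2)) b,
    integral_gaussian]
  have hpref : c₀ * Real.sqrt (Real.pi / c) = u ^ (-(1:ℝ) / 2) := by
    have h1 : Real.pi / c = (2 * Real.pi * σ ^ 2) / u := by
      rw [hc_def]; field_simp
    have hc0 : c₀ = (Real.sqrt (2 * Real.pi * σ ^ 2))⁻¹ := by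
      rw [hc0_def, Real.sqrt_eq_rpow, ← Real.rpow_neg (by positivity)]; norm_num
    have hu2 : u ^ (-(1:ℝ) / 2) = (Real.sqrt u)⁻¹ := by
      rw [Real.sqrt_eq_rpow, ← Real.rpow_neg (le_of_lt hu)]; norm_num
    rw [h1, Real.sqrt_div' (2 * Real.pi * σ ^ 2) ?_, hc0, hu2]
    · have hX : Real.sqrt (2 * Real.pi * σ ^ 2) ≠ 0 := by
        positivity
      field_simp
    · positivity
  calc c₀ * Real.exp (-(t * (a - m) ^ 2) / u) * Real.sqrt (Real.pi / c)
      = (c₀ * Real.sqrt (Real.pi / c)) * Real.exp (-(t * (a - m) ^ 2) / u) := by ring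
    _ = u ^ (-(1:ℝ) / 2) * Real.exp (-(t * (a - m) ^ 2) / u) := by rw [hpref]

lemma norm_sq_eucl {d : ℕ} (v : EuclideanSpace ℝ (Fin d)) : ‖v‖ ^ 2 = ∑ i, (v i) ^ 2 := by
  rw [EuclideanSpace.norm_eq, Real.sq_sqrt (Finset.sum_nonneg fun i _ => by positivity)]
  simp [sq_abs]

lemma gaussd (d : ℕ) {σ t : ℝ} (hσ : 0 < σ) (ht : 0 ≤ t) (a m : EuclideanSpace ℝ (Fin d)) :
    ∫ x, Real.exp (-(t * ‖x - a‖ ^ 2)) ∂((volume : Measure (EuclideanSpace ℝ (Fin d))).withDensity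
      (fun x => ENNReal.ofReal ((2 * Real.pi * σ ^ 2) ^ (-(d : ℝ) / 2) *
        Real.exp (-‖x - m‖ ^ 2 / (2 * σ ^ 2)))))
    = (1 + 2 * t * σ ^ 2) ^ (-(d:ℝ) / 2) *
        Real.exp (-(t * ‖a - m‖ ^ 2) / (1 + 2 * t * σ ^ 2)) := by
  have hu : (0:ℝ) < 1 + 2 * t * σ ^ 2 := by positivity
  set ρ : EuclideanSpace ℝ (Fin d) → ℝ := fun x =>
    (2 * Real.pi * σ ^ 2) ^ (-(d : ℝ) / 2) * Real.exp (-‖x - m‖ ^ 2 / (2 * σ ^ 2)) with hρ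
  have hρ0 : ∀ x, 0 ≤ ρ x := fun x => by positivity
  have hρcont : Continuous ρ := by fun_prop
  have hmeas : Measurable (fun x => (ρ x).toNNReal) := hρcont.measurable.real_toNNReal
  have h1 : ((volume : Measure (EuclideanSpace ℝ (Fin d))).withDensity
      (fun x => ENNReal.ofReal (ρ x)))
      = (volume : Measure (EuclideanSpace ℝ (Fin d))).withDensity
        (fun x => ((fun x => (ρ x).toNNReal) x : ℝ≥0∞)) := rfl
  rw [h1, integral_withDensity_eq_integral_smul hmeas]
  have h2 : ∀ x, ((ρ x).toNNReal : ℝ≥0) • Real.exp (-(t * ‖x - a‖ ^ 2))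
      = ρ x * Real.exp (-(t * ‖x - a‖ ^ 2)) := by
    intro x
    rw [NNReal.smul_def, Real.coe_toNNReal _ (hρ0 x), smul_eq_mul]
  simp_rw [h2]
  have hmp := (EuclideanSpace.volume_preserving_symm_measurableEquiv_toLp (Fin d)).symm
  rw [← hmp.integral_comp (MeasurableEquiv.measurableEmbedding _)]
  have hcoord : ∀ (y : Fin d → ℝ) (w : EuclideanSpace ℝ (Fin d)) (i : Fin d),
      ((MeasurableEquiv.toLp 2 (Fin d → ℝ)) y - w) i = y i - w i := by
    intro y w i
    simp [PiLp.sub_apply]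
  have hnrm : ∀ (y : Fin d → ℝ) (w : EuclideanSpace ℝ (Fin d)),
      ‖(MeasurableEquiv.toLp 2 (Fin d → ℝ)) y - w‖ ^ 2 = ∑ i, (y i - w i) ^ 2 := by
    intro y w
    rw [norm_sq_eucl]
    exact Finset.sum_congr rfl fun i _ => by rw [hcoord]
  have hpow1 : (2 * Real.pi * σ ^ 2) ^ (-(d:ℝ)/2) = ((2 * Real.pi * σ ^ 2) ^ (-(1:ℝ)/2)) ^ (d:ℕ) := by
    rw [← Real.rpow_natCast ((2 * Real.pi * σ ^ 2) ^ (-(1:ℝ)/2)) d,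
      ← Real.rpow_mul (by positivity)]
    ring_nf
  have hpow2 : (1 + 2 * t * σ ^ 2) ^ (-(d:ℝ)/2) = ((1 + 2 * t * σ ^ 2) ^ (-(1:ℝ)/2)) ^ (d:ℕ) := by
    rw [← Real.rpow_natCast ((1 + 2 * t * σ ^ 2) ^ (-(1:ℝ)/2)) d,
      ← Real.rpow_mul (le_of_lt hu)]
    ring_nf
  have hnrm2 : ‖a - m‖ ^ 2 = ∑ i, (a i - m i) ^ 2 := by
    rw [norm_sq_eucl]
    exact Finset.sum_congr rfl fun i _ => by rw [PiLp.sub_apply]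
  calc ∫ y : Fin d → ℝ, (fun x => ρ x * Real.exp (-(t * ‖x - a‖ ^ 2)))
        ((MeasurableEquiv.toLp 2 (Fin d → ℝ)) y)
      = ∫ y : Fin d → ℝ, ∏ i, (Real.exp (-(t * (y i - a i) ^ 2)) *
          ((2 * Real.pi * σ ^ 2) ^ (-(1:ℝ)/2) * Real.exp (-(y i - m i) ^ 2 / (2 * σ ^ 2)))) := by
        congr 1
        funext y
        have e1 : ∑ i, -(t * (y i - a i) ^ 2) = -(t * ∑ i, (y i - a i) ^ 2) := by
          rw [Finset.sum_neg_distrib, ← Finset.mul_sum]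
        have e2 : ∑ i, -(y i - m i) ^ 2 / (2 * σ ^ 2)
            = -(∑ i, (y i - m i) ^ 2) / (2 * σ ^ 2) := by
          rw [← Finset.sum_div, Finset.sum_neg_distrib]
        simp only [hρ, hnrm, Finset.prod_mul_distrib, Finset.prod_const, Finset.card_univ,
          Fintype.card_fin, ← Real.exp_sum, hpow1, e1, e2]
        ring
    _ = ∏ i, ∫ s : ℝ, Real.exp (-(t * (s - a i) ^ 2)) *
          ((2 * Real.pi * σ ^ 2) ^ (-(1:ℝ)/2) * Real.exp (-(s - m i) ^ 2 / (2 * σ ^ 2))) :=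
        MeasureTheory.integral_fintype_prod_eq_prod (ι := Fin d)
          (fun i (s : ℝ) => Real.exp (-(t * (s - a i) ^ 2)) *
            ((2 * Real.pi * σ ^ 2) ^ (-(1:ℝ)/2) * Real.exp (-(s - m i) ^ 2 / (2 * σ ^ 2))))
    _ = ∏ i : Fin d, ((1 + 2 * t * σ ^ 2) ^ (-(1:ℝ)/2) *
          Real.exp (-(t * (a i - m i) ^ 2) / (1 + 2 * t * σ ^ 2))) :=
        Finset.prod_congr rfl fun i _ => gauss1 hσ ht (a i) (m i)
    _ = (1 + 2 * t * σ ^ 2) ^ (-(d:ℝ)/2) *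
          Real.exp (-(t * ‖a - m‖ ^ 2) / (1 + 2 * t * σ ^ 2)) := by
        have e3 : ∑ i, -(t * (a i - m i) ^ 2) / (1 + 2 * t * σ ^ 2)
            = -(t * ∑ i, (a i - m i) ^ 2) / (1 + 2 * t * σ ^ 2) := by
          rw [← Finset.sum_div, Finset.sum_neg_distrib, ← Finset.mul_sum]
        simp only [Finset.prod_mul_distrib, Finset.prod_const, Finset.card_univ,
          Fintype.card_fin, ← Real.exp_sum, hpow2, hnrm2, e3]

lemma gauss2 (d : ℕ) {σ t : ℝ} (hσ : 0 < σ) (ht : 0 ≤ t) (m0 m1 : EuclideanSpace ℝ (Fin d)) :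
    (∫ y, ∫ x, Real.exp (-(t * ‖y - x‖ ^ 2))
        ∂((volume : Measure (EuclideanSpace ℝ (Fin d))).withDensity
          (fun x => ENNReal.ofReal ((2 * Real.pi * σ ^ 2) ^ (-(d : ℝ) / 2) *
            Real.exp (-‖x - m0‖ ^ 2 / (2 * σ ^ 2)))))
        ∂((volume : Measure (EuclideanSpace ℝ (Fin d))).withDensity
          (fun x => ENNReal.ofReal ((2 * Real.pi * σ ^ 2) ^ (-(d : ℝ) / 2) *
            Real.exp (-‖x - m1‖ ^ 2 / (2 * σ ^ 2))))))
    = (1 + 4 * t * σ ^ 2) ^ (-(d:ℝ)/2) *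
        Real.exp (-(t * ‖m0 - m1‖ ^ 2) / (1 + 4 * t * σ ^ 2)) := by
  have hu : (0:ℝ) < 1 + 2 * t * σ ^ 2 := by positivity
  have ht' : 0 ≤ t / (1 + 2 * t * σ ^ 2) := div_nonneg ht (le_of_lt hu)
  have hu' : (0:ℝ) < 1 + 2 * (t / (1 + 2 * t * σ ^ 2)) * σ ^ 2 := by positivity
  have hA : (0:ℝ) < 1 + 4 * t * σ ^ 2 := by positivity
  have hinner : ∀ y : EuclideanSpace ℝ (Fin d),
      (∫ x, Real.exp (-(t * ‖y - x‖ ^ 2))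
        ∂((volume : Measure (EuclideanSpace ℝ (Fin d))).withDensity
          (fun x => ENNReal.ofReal ((2 * Real.pi * σ ^ 2) ^ (-(d : ℝ) / 2) *
            Real.exp (-‖x - m0‖ ^ 2 / (2 * σ ^ 2))))))
      = (1 + 2 * t * σ ^ 2) ^ (-(d:ℝ)/2) *
          Real.exp (-((t / (1 + 2 * t * σ ^ 2)) * ‖y - m0‖ ^ 2)) := by
    intro y
    rw [show (fun x : EuclideanSpace ℝ (Fin d) => Real.exp (-(t * ‖y - x‖ ^ 2)))
        = fun x => Real.exp (-(t * ‖x - y‖ ^ 2)) from funext fun x => by rw [norm_sub_rev],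
      gaussd d hσ ht y m0]
    congr 1
    rw [show -(t * ‖y - m0‖ ^ 2) / (1 + 2 * t * σ ^ 2)
        = -(t / (1 + 2 * t * σ ^ 2) * ‖y - m0‖ ^ 2) by ring]
  simp_rw [hinner]
  rw [MeasureTheory.integral_const_mul, gaussd d hσ ht' m0 m1, ← mul_assoc,
    ← Real.mul_rpow (le_of_lt hu) (le_of_lt hu')]
  rw [show (1 + 2 * (t / (1 + 2 * t * σ ^ 2)) * σ ^ 2) = (1 + 4 * t * σ ^ 2) / (1 + 2 * t * σ ^ 2)
    from by field_simp; ring]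
  rw [show (1 + 2 * t * σ ^ 2) * ((1 + 4 * t * σ ^ 2) / (1 + 2 * t * σ ^ 2)) = 1 + 4 * t * σ ^ 2
    from by field_simp]
  congr 1
  rw [div_div_eq_mul_div]
  rw [show -(t / (1 + 2 * t * σ ^ 2) * ‖m0 - m1‖ ^ 2) * (1 + 2 * t * σ ^ 2) = -(t * ‖m0 - m1‖ ^ 2)
    from by field_simp]

lemma gauss_integrable (d : ℕ) {σ : ℝ} (hσ : 0 < σ) (m : EuclideanSpace ℝ (Fin d)) :
    Integrable (fun x : EuclideanSpace ℝ (Fin d) =>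
      (2 * Real.pi * σ ^ 2) ^ (-(d : ℝ) / 2) * Real.exp (-‖x - m‖ ^ 2 / (2 * σ ^ 2))) := by
  have hb : (0:ℝ) < 1 / (2 * σ ^ 2) := by positivity
  have h1 : Integrable (fun v : EuclideanSpace ℝ (Fin d) =>
      Complex.exp (-(1 / (2 * σ ^ 2) : ℂ) * (‖v‖:ℂ) ^ 2 +
        (0:ℂ) * ((inner ℝ (0 : EuclideanSpace ℝ (Fin d)) v : ℝ) : ℂ))) := by
    refine GaussianFourier.integrable_cexp_neg_mul_sq_norm_add ?_ 0 0
    rw [show (1 / (2 * (σ:ℂ) ^ 2)) = ((1 / (2 * σ ^ 2) : ℝ) : ℂ) by push_cast; ring,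
      Complex.ofReal_re]
    positivity
  have h2 : Integrable (fun v : EuclideanSpace ℝ (Fin d) =>
      Real.exp (-‖v‖ ^ 2 / (2 * σ ^ 2))) := by
    have := h1.re
    refine this.congr (Filter.Eventually.of_forall fun v => ?_)
    simp only [zero_mul, add_zero, RCLike.re_to_complex]
    rw [show (-(1 / (2 * σ ^ 2) : ℂ) * (‖v‖:ℂ) ^ 2) = ((-‖v‖ ^ 2 / (2 * σ ^ 2) : ℝ) : ℂ) by
      push_cast; ring, ← Complex.ofReal_exp, Complex.ofReal_re]
  have h3 : Integrable (fun v : EuclideanSpace ℝ (Fin d) =>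
      Real.exp (-‖v - m‖ ^ 2 / (2 * σ ^ 2))) := by
    have := h2.comp_add_right (-m)
    refine this.congr (Filter.Eventually.of_forall fun v => ?_)
    simp only [sub_eq_add_neg]
  exact h3.const_mul _

lemma gauss_finite (d : ℕ) {σ : ℝ} (hσ : 0 < σ) (m : EuclideanSpace ℝ (Fin d)) :
    IsFiniteMeasure ((volume : Measure (EuclideanSpace ℝ (Fin d))).withDensity
      (fun x => ENNReal.ofReal ((2 * Real.pi * σ ^ 2) ^ (-(d : ℝ) / 2) *
        Real.exp (-‖x - m‖ ^ 2 / (2 * σ ^ 2))))) :=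
  isFiniteMeasure_withDensity_ofReal (gauss_integrable d hσ m).hasFiniteIntegral

lemma pair (d : ℕ) (ν : Measure ℝ) [IsFiniteMeasure ν] {σ : ℝ} (hσ : 0 < σ)
    (m0 m1 : EuclideanSpace ℝ (Fin d)) :
    (∫ y, ∫ x, (∫ t in Set.Ici (0:ℝ), Real.exp (-(t * ‖y - x‖ ^ 2)) ∂ν)
        ∂((volume : Measure (EuclideanSpace ℝ (Fin d))).withDensity
          (fun x => ENNReal.ofReal ((2 * Real.pi * σ ^ 2) ^ (-(d : ℝ) / 2) *
            Real.exp (-‖x - m0‖ ^ 2 / (2 * σ ^ 2)))))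
        ∂((volume : Measure (EuclideanSpace ℝ (Fin d))).withDensity
          (fun x => ENNReal.ofReal ((2 * Real.pi * σ ^ 2) ^ (-(d : ℝ) / 2) *
            Real.exp (-‖x - m1‖ ^ 2 / (2 * σ ^ 2))))))
    = ∫ t in Set.Ici (0:ℝ), (1 + 4 * t * σ ^ 2) ^ (-(d:ℝ)/2) *
        Real.exp (-(t * ‖m0 - m1‖ ^ 2) / (1 + 4 * t * σ ^ 2)) ∂ν := by
  set G0 : Measure (EuclideanSpace ℝ (Fin d)) :=
    (volume : Measure (EuclideanSpace ℝ (Fin d))).withDensity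
      (fun x => ENNReal.ofReal ((2 * Real.pi * σ ^ 2) ^ (-(d : ℝ) / 2) *
        Real.exp (-‖x - m0‖ ^ 2 / (2 * σ ^ 2)))) with hG0
  set G1 : Measure (EuclideanSpace ℝ (Fin d)) :=
    (volume : Measure (EuclideanSpace ℝ (Fin d))).withDensity
      (fun x => ENNReal.ofReal ((2 * Real.pi * σ ^ 2) ^ (-(d : ℝ) / 2) *
        Real.exp (-‖x - m1‖ ^ 2 / (2 * σ ^ 2)))) with hG1
  haveI : IsFiniteMeasure G0 := gauss_finite d hσ m0
  haveI : IsFiniteMeasure G1 := gauss_finite d hσ m1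
  set μP : Measure (EuclideanSpace ℝ (Fin d) × EuclideanSpace ℝ (Fin d)) := G1.prod G0 with hμP
  set νr : Measure ℝ := ν.restrict (Set.Ici 0) with hνr
  have haeP : ∀ᵐ p ∂(μP.prod νr), (0:ℝ) ≤ p.2 := by
    rw [ae_iff]
    have hset : {p : (EuclideanSpace ℝ (Fin d) × EuclideanSpace ℝ (Fin d)) × ℝ | ¬ (0:ℝ) ≤ p.2}
        = Set.univ ×ˢ Set.Iio 0 := by
      ext p; simp [not_le]
    rw [hset, Measure.prod_prod, hνr, Measure.restrict_apply measurableSet_Iio]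
    rw [show Set.Iio (0:ℝ) ∩ Set.Ici 0 = ∅ by ext x; simp]
    simp
  have hFc : Continuous (fun p : (EuclideanSpace ℝ (Fin d) × EuclideanSpace ℝ (Fin d)) × ℝ =>
      Real.exp (-(p.2 * ‖p.1.1 - p.1.2‖ ^ 2))) := by fun_prop
  have hFint : Integrable (Function.uncurry
      (fun (z : EuclideanSpace ℝ (Fin d) × EuclideanSpace ℝ (Fin d)) (t : ℝ) =>
        Real.exp (-(t * ‖z.1 - z.2‖ ^ 2)))) (μP.prod νr) := by
    refine Integrable.mono' (integrable_const 1) hFc.aestronglyMeasurable ?_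
    filter_upwards [haeP] with p hp
    simp only [Function.uncurry]
    rw [Real.norm_eq_abs, Real.abs_exp, Real.exp_le_one_iff]
    exact neg_nonpos.mpr (mul_nonneg hp (by positivity))
  have step1 : (∫ y, ∫ x, (∫ t in Set.Ici (0:ℝ), Real.exp (-(t * ‖y - x‖ ^ 2)) ∂ν) ∂G0 ∂G1)
      = ∫ z, (∫ t in Set.Ici (0:ℝ), Real.exp (-(t * ‖z.1 - z.2‖ ^ 2)) ∂ν)
          ∂(μP : Measure (EuclideanSpace ℝ (Fin d) × EuclideanSpace ℝ (Fin d))) := by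
    exact (integral_prod _ hFint.integral_prod_left).symm
  rw [step1]
  have step2 : (∫ z, (∫ t in Set.Ici (0:ℝ), Real.exp (-(t * ‖z.1 - z.2‖ ^ 2)) ∂ν) ∂μP)
      = ∫ t in Set.Ici (0:ℝ), (∫ z, Real.exp (-(t * ‖z.1 - z.2‖ ^ 2)) ∂μP) ∂ν :=
    integral_integral_swap hFint
  rw [step2]
  refine integral_congr_ae ?_
  filter_upwards [ae_restrict_mem measurableSet_Ici] with t ht
  have hzint : Integrable (fun z : EuclideanSpace ℝ (Fin d) × EuclideanSpace ℝ (Fin d) =>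
      Real.exp (-(t * ‖z.1 - z.2‖ ^ 2))) μP := by
    have hc : Continuous (fun z : EuclideanSpace ℝ (Fin d) × EuclideanSpace ℝ (Fin d) =>
        Real.exp (-(t * ‖z.1 - z.2‖ ^ 2))) := by fun_prop
    refine Integrable.mono' (integrable_const 1) hc.aestronglyMeasurable ?_
    refine Filter.Eventually.of_forall fun z => ?_
    rw [Real.norm_eq_abs, Real.abs_exp, Real.exp_le_one_iff]
    exact neg_nonpos.mpr (mul_nonneg ht (by positivity))
  rw [integral_prod _ hzint]
  exact gauss2 d hσ ht m0 m1


/-- For a radial kernel k(x,y) = ∫₀^∞ e^{-t‖x-y‖²} dν(t), the squared RKHS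
distance between the kernel mean embeddings of N(μ₀, σ²I) and N(μ₁, σ²I) is
∫₀^∞ 2 (1+4tσ²)^{-d/2} (1 - exp(-t‖μ₀-μ₁‖²/(1+4tσ²))) dν(t). -/
theorem rkhs_dist_gaussian_embeddings_radial (d : ℕ)
    (ν : Measure ℝ) [IsFiniteMeasure ν] (hν : ν (Set.Iio 0) = 0)
    (H : Type*) [NormedAddCommGroup H] [InnerProductSpace ℝ H] [CompleteSpace H]
    (φ : EuclideanSpace ℝ (Fin d) → H)
    (hφ : ∀ x y, @inner ℝ _ _ (φ x) (φ y) =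
      ∫ t in Set.Ici (0 : ℝ), Real.exp (-(t * ‖x - y‖ ^ 2)) ∂ν)
    (μ₀ μ₁ : EuclideanSpace ℝ (Fin d)) (σ : ℝ) (hσ : 0 < σ)
    (G₀ G₁ : Measure (EuclideanSpace ℝ (Fin d)))
    (hG₀ : G₀ = (volume : Measure (EuclideanSpace ℝ (Fin d))).withDensity
      (fun x => ENNReal.ofReal ((2 * Real.pi * σ ^ 2) ^ (-(d : ℝ) / 2) *
        Real.exp (-‖x - μ₀‖ ^ 2 / (2 * σ ^ 2)))))
    (hG₁ : G₁ = (volume : Measure (EuclideanSpace ℝ (Fin d))).withDensity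
      (fun x => ENNReal.ofReal ((2 * Real.pi * σ ^ 2) ^ (-(d : ℝ) / 2) *
        Real.exp (-‖x - μ₁‖ ^ 2 / (2 * σ ^ 2))))) :
    ‖(∫ x, φ x ∂G₀) - ∫ x, φ x ∂G₁‖ ^ 2 =
      ∫ t in Set.Ici (0 : ℝ),
        2 * (1 + 4 * t * σ ^ 2) ^ (-(d : ℝ) / 2) *
          (1 - Real.exp (-(t * ‖μ₀ - μ₁‖ ^ 2) / (1 + 4 * t * σ ^ 2))) ∂ν := by
  haveI hfin0 : IsFiniteMeasure G₀ := hG₀ ▸ gauss_finite d hσ μ₀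
  haveI hfin1 : IsFiniteMeasure G₁ := hG₁ ▸ gauss_finite d hσ μ₁
  set Cν : ℝ := (ν (Set.Ici 0)).toReal with hCν
  have hφxx : ∀ x, (inner ℝ (φ x) (φ x) : ℝ) = Cν := by
    intro x
    rw [hφ x x]
    simp only [sub_self, norm_zero, ne_eq, OfNat.ofNat_ne_zero, not_false_eq_true, zero_pow,
      mul_zero, neg_zero, Real.exp_zero]
    simp [integral_const, Measure.restrict_apply_univ, hCν, measureReal_def]
  have hnormφ : ∀ x, ‖φ x‖ = Real.sqrt Cν := by
    intro x
    rw [← Real.sqrt_sq (norm_nonneg (φ x)), ← real_inner_self_eq_norm_sq, hφxx]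
  have hA : ∀ t : ℝ, 0 ≤ t → (0:ℝ) < 1 + 4 * t * σ ^ 2 := by
    intro t ht0
    nlinarith [mul_nonneg ht0 (sq_nonneg σ)]
  have hcont : Continuous φ := by
    rw [continuous_iff_continuousAt]
    intro x
    have hk : Filter.Tendsto (fun y => ∫ t in Set.Ici (0:ℝ), Real.exp (-(t * ‖y - x‖ ^ 2)) ∂ν)
        (nhds x) (nhds Cν) := by
      have h := MeasureTheory.tendsto_integral_filter_of_dominated_convergence
        (μ := ν.restrict (Set.Ici 0)) (l := nhds x)
        (F := fun (y : EuclideanSpace ℝ (Fin d)) (t : ℝ) => Real.exp (-(t * ‖y - x‖ ^ 2)))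
        (f := fun _ : ℝ => (1:ℝ)) (fun _ => (1:ℝ))
        (Filter.Eventually.of_forall fun y =>
          Continuous.aestronglyMeasurable (by fun_prop))
        (Filter.Eventually.of_forall fun y => by
          filter_upwards [ae_restrict_mem measurableSet_Ici] with t ht
          have ht0 : (0:ℝ) ≤ t := ht
          rw [Real.norm_eq_abs, Real.abs_exp, Real.exp_le_one_iff]
          exact neg_nonpos.mpr (mul_nonneg ht0 (by positivity)))
        (integrable_const 1)
        (Filter.Eventually.of_forall fun t => by
          have hc : Continuous fun y : EuclideanSpace ℝ (Fin d) =>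
              Real.exp (-(t * ‖y - x‖ ^ 2)) := by fun_prop
          have := hc.tendsto x
          simpa using this)
      simpa [integral_const, Measure.restrict_apply_univ, hCν, measureReal_def] using h
    have hsq : Filter.Tendsto (fun y => ‖φ y - φ x‖ ^ 2) (nhds x) (nhds 0) := by
      have hps : (fun y => ‖φ y - φ x‖ ^ 2)
          = fun y => 2 * Cν - 2 * (∫ t in Set.Ici (0:ℝ), Real.exp (-(t * ‖y - x‖ ^ 2)) ∂ν) := by
        funext y
        rw [norm_sub_sq_real, ← real_inner_self_eq_norm_sq, ← real_inner_self_eq_norm_sq,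
          hφxx, hφxx, hφ]
        ring
      rw [hps]
      have h2 := Filter.Tendsto.sub (tendsto_const_nhds (x := 2 * Cν)) (hk.const_mul 2)
      simpa using h2
    rw [ContinuousAt, tendsto_iff_norm_sub_tendsto_zero]
    have h3 := (Real.continuous_sqrt.tendsto 0).comp hsq
    have heq : (fun y => Real.sqrt (‖φ y - φ x‖ ^ 2)) = fun y => ‖φ y - φ x‖ :=
      funext fun y => Real.sqrt_sq (norm_nonneg _)
    rw [show (fun y : EuclideanSpace ℝ (Fin d) => ‖φ y - φ x‖)
        = (Real.sqrt ∘ fun y => ‖φ y - φ x‖ ^ 2) from by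
      funext y; simp [Function.comp, Real.sqrt_sq (norm_nonneg _)]]
    simpa using h3
  have hint0 : Integrable φ G₀ :=
    Integrable.mono' (integrable_const (Real.sqrt Cν)) hcont.aestronglyMeasurable
      (Filter.Eventually.of_forall fun x => le_of_eq (hnormφ x))
  have hint1 : Integrable φ G₁ :=
    Integrable.mono' (integrable_const (Real.sqrt Cν)) hcont.aestronglyMeasurable
      (Filter.Eventually.of_forall fun x => le_of_eq (hnormφ x))
  have hK : ∀ (mi mj : EuclideanSpace ℝ (Fin d)) (Gi Gj : Measure (EuclideanSpace ℝ (Fin d)))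
      (hGi : Gi = (volume : Measure (EuclideanSpace ℝ (Fin d))).withDensity
        (fun x => ENNReal.ofReal ((2 * Real.pi * σ ^ 2) ^ (-(d : ℝ) / 2) *
          Real.exp (-‖x - mi‖ ^ 2 / (2 * σ ^ 2)))))
      (hGj : Gj = (volume : Measure (EuclideanSpace ℝ (Fin d))).withDensity
        (fun x => ENNReal.ofReal ((2 * Real.pi * σ ^ 2) ^ (-(d : ℝ) / 2) *
          Real.exp (-‖x - mj‖ ^ 2 / (2 * σ ^ 2)))))
      (hIi : Integrable φ Gi) (hIj : Integrable φ Gj),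
      (inner ℝ (∫ x, φ x ∂Gi) (∫ x, φ x ∂Gj) : ℝ)
        = ∫ t in Set.Ici (0:ℝ), (1 + 4 * t * σ ^ 2) ^ (-(d:ℝ)/2) *
            Real.exp (-(t * ‖mi - mj‖ ^ 2) / (1 + 4 * t * σ ^ 2)) ∂ν := by
    intro mi mj Gi Gj hGi hGj hIi hIj
    rw [← integral_inner hIj]
    have hswap : ∀ y, (inner ℝ (∫ x, φ x ∂Gi) (φ y) : ℝ)
        = ∫ x, (inner ℝ (φ y) (φ x) : ℝ) ∂Gi := by
      intro y
      rw [real_inner_comm, ← integral_inner hIi]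
    simp_rw [hswap, hφ]
    rw [hGi, hGj]
    exact pair d ν hσ mi mj
  rw [norm_sub_sq_real, ← real_inner_self_eq_norm_sq, ← real_inner_self_eq_norm_sq]
  rw [hK μ₀ μ₀ G₀ G₀ hG₀ hG₀ hint0 hint0, hK μ₀ μ₁ G₀ G₁ hG₀ hG₁ hint0 hint1,
    hK μ₁ μ₁ G₁ G₁ hG₁ hG₁ hint1 hint1]
  have hself : ∀ m : EuclideanSpace ℝ (Fin d),
      (∫ t in Set.Ici (0:ℝ), (1 + 4 * t * σ ^ 2) ^ (-(d:ℝ)/2) *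
        Real.exp (-(t * ‖m - m‖ ^ 2) / (1 + 4 * t * σ ^ 2)) ∂ν)
      = ∫ t in Set.Ici (0:ℝ), (1 + 4 * t * σ ^ 2) ^ (-(d:ℝ)/2) ∂ν := by
    intro m
    refine integral_congr_ae (Filter.Eventually.of_forall fun t => ?_)
    simp
  rw [hself μ₀, hself μ₁]
  -- integrability on the restricted measure
  have hbase : Continuous fun t : ℝ => 1 + 4 * t * σ ^ 2 := by fun_prop
  have hPsm : AEStronglyMeasurable (fun t : ℝ => (1 + 4 * t * σ ^ 2) ^ (-(d:ℝ)/2))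
      (ν.restrict (Set.Ici 0)) := by
    refine ContinuousOn.aestronglyMeasurable ?_ measurableSet_Ici
    intro t ht
    exact (hbase.continuousAt.rpow_const (Or.inl (ne_of_gt (hA t ht)))).continuousWithinAt
  have hexp_nonpos : ∀ t : ℝ, 0 ≤ t →
      -(t * ‖μ₀ - μ₁‖ ^ 2) / (1 + 4 * t * σ ^ 2) ≤ 0 := by
    intro t ht0
    exact div_nonpos_of_nonpos_of_nonneg
      (neg_nonpos.mpr (mul_nonneg ht0 (by positivity))) (le_of_lt (hA t ht0))
  have hd2 : -(d:ℝ)/2 ≤ 0 := by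
    have : (0:ℝ) ≤ (d:ℝ)/2 := by positivity
    linarith [this]
  have hPle : ∀ t : ℝ, 0 ≤ t → (1 + 4 * t * σ ^ 2) ^ (-(d:ℝ)/2) ≤ 1 := by
    intro t ht0
    exact Real.rpow_le_one_of_one_le_of_nonpos
      (by nlinarith [mul_nonneg ht0 (sq_nonneg σ)]) hd2
  have hPint : Integrable (fun t : ℝ => (1 + 4 * t * σ ^ 2) ^ (-(d:ℝ)/2))
      (ν.restrict (Set.Ici 0)) := by
    refine Integrable.mono' (integrable_const 1) hPsm ?_
    filter_upwards [ae_restrict_mem measurableSet_Ici] with t ht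
    have ht0 : (0:ℝ) ≤ t := ht
    rw [Real.norm_eq_abs, abs_of_nonneg (Real.rpow_nonneg (le_of_lt (hA t ht0)) _)]
    exact hPle t ht0
  have hPEsm : AEStronglyMeasurable (fun t : ℝ => (1 + 4 * t * σ ^ 2) ^ (-(d:ℝ)/2) *
      Real.exp (-(t * ‖μ₀ - μ₁‖ ^ 2) / (1 + 4 * t * σ ^ 2))) (ν.restrict (Set.Ici 0)) := by
    refine ContinuousOn.aestronglyMeasurable ?_ measurableSet_Ici
    refine ContinuousOn.mul ?_ ?_
    · intro t ht
      exact (hbase.continuousAt.rpow_const (Or.inl (ne_of_gt (hA t ht)))).continuousWithinAt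
    · exact Real.continuous_exp.comp_continuousOn
        (ContinuousOn.div (by fun_prop) hbase.continuousOn fun t ht => ne_of_gt (hA t ht))
  have hPEint : Integrable (fun t : ℝ => (1 + 4 * t * σ ^ 2) ^ (-(d:ℝ)/2) *
      Real.exp (-(t * ‖μ₀ - μ₁‖ ^ 2) / (1 + 4 * t * σ ^ 2))) (ν.restrict (Set.Ici 0)) := by
    refine Integrable.mono' (integrable_const 1) hPEsm ?_
    filter_upwards [ae_restrict_mem measurableSet_Ici] with t ht
    have ht0 : (0:ℝ) ≤ t := ht
    have hp0 : (0:ℝ) ≤ (1 + 4 * t * σ ^ 2) ^ (-(d:ℝ)/2) :=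
      Real.rpow_nonneg (le_of_lt (hA t ht0)) _
    rw [Real.norm_eq_abs, abs_of_nonneg (mul_nonneg hp0 (le_of_lt (Real.exp_pos _)))]
    calc (1 + 4 * t * σ ^ 2) ^ (-(d:ℝ)/2) *
          Real.exp (-(t * ‖μ₀ - μ₁‖ ^ 2) / (1 + 4 * t * σ ^ 2))
        ≤ 1 * 1 := by
          apply mul_le_mul (hPle t ht0) (Real.exp_le_one_iff.mpr (hexp_nonpos t ht0))
            (le_of_lt (Real.exp_pos _)) zero_le_one
      _ = 1 := by ring
  have hrhs : (∫ t in Set.Ici (0:ℝ),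
      2 * (1 + 4 * t * σ ^ 2) ^ (-(d : ℝ) / 2) *
        (1 - Real.exp (-(t * ‖μ₀ - μ₁‖ ^ 2) / (1 + 4 * t * σ ^ 2))) ∂ν)
      = 2 * (∫ t in Set.Ici (0:ℝ), (1 + 4 * t * σ ^ 2) ^ (-(d:ℝ)/2) ∂ν)
        - 2 * ∫ t in Set.Ici (0:ℝ), (1 + 4 * t * σ ^ 2) ^ (-(d:ℝ)/2) *
            Real.exp (-(t * ‖μ₀ - μ₁‖ ^ 2) / (1 + 4 * t * σ ^ 2)) ∂ν := by
    rw [show (fun t => 2 * (1 + 4 * t * σ ^ 2) ^ (-(d : ℝ) / 2) *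
        (1 - Real.exp (-(t * ‖μ₀ - μ₁‖ ^ 2) / (1 + 4 * t * σ ^ 2))))
        = fun t => 2 * ((1 + 4 * t * σ ^ 2) ^ (-(d:ℝ)/2))
          - 2 * ((1 + 4 * t * σ ^ 2) ^ (-(d:ℝ)/2) *
            Real.exp (-(t * ‖μ₀ - μ₁‖ ^ 2) / (1 + 4 * t * σ ^ 2)))
      from funext fun t => by ring]
    rw [integral_sub (hPint.const_mul 2) (hPEint.const_mul 2),
      MeasureTheory.integral_const_mul, MeasureTheory.integral_const_mul]
  rw [hrhs]
  ring
end

section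
/- Let θ_0, θ_1 be kernel mean embeddings of Gaussian measures N(μ_0, σ²I) and N(μ_1, σ²I) on ℝ^d for a translation invariant kernel k(x,y) = ψ(x−y) with ψ ∈ C_b(ℝ^d) positive definite and Bochner measure Λ_ψ. Then ⟨θ_0, θ_1⟩_{H_k} = (2π)^{−d/2} ∫_{ℝ^d} cos(⟨μ_0 − μ_1, w⟩) e^{−σ²‖w‖²} dΛ_ψ(w), and consequently ‖θ_0 − θ_1‖²_{H_k} = 2(2π)^{−d/2} ∫_{ℝ^d} e^{−σ²‖w‖²} (1 − cos(⟨μ_0 − μ_1, w⟩)) dΛ_ψ(w). -/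
open MeasureTheory Complex
open scoped ENNReal NNReal

noncomputable def gaussMeasure (d : ℕ) (σ : ℝ) (μ : EuclideanSpace ℝ (Fin d)) :
    Measure (EuclideanSpace ℝ (Fin d)) :=
  (volume : Measure (EuclideanSpace ℝ (Fin d))).withDensity
    (fun x => ENNReal.ofReal ((2 * Real.pi * σ ^ 2) ^ (-(d : ℝ) / 2) *
      Real.exp (-‖x - μ‖ ^ 2 / (2 * σ ^ 2))))

lemma gaussCF (d : ℕ) (σ : ℝ) (hσ : 0 < σ) (μ w : EuclideanSpace ℝ (Fin d)) :
    ∫ x, Complex.exp (-(@inner ℝ _ _ x w : ℝ) * Complex.I) ∂(gaussMeasure d σ μ) =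
      Complex.exp (-(@inner ℝ _ _ μ w : ℝ) * Complex.I) *
        Real.exp (-(σ ^ 2 * ‖w‖ ^ 2) / 2) := by
  have h2 : (0:ℝ) < 2 * Real.pi * σ ^ 2 := by positivity
  set N : ℝ := (2 * Real.pi * σ ^ 2) ^ (-(d : ℝ) / 2) with hN
  have hN0 : 0 ≤ N := Real.rpow_nonneg h2.le _
  set ρ : EuclideanSpace ℝ (Fin d) → ℝ :=
    fun x => N * Real.exp (-‖x - μ‖ ^ 2 / (2 * σ ^ 2)) with hρ
  have hρ0 : ∀ x, 0 ≤ ρ x := fun x => by positivity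
  have hρm : Measurable fun x => (ρ x).toNNReal := by
    apply Measurable.real_toNNReal; fun_prop
  have key : ∫ x, Complex.exp (-(@inner ℝ _ _ x w : ℝ) * Complex.I) ∂(gaussMeasure d σ μ)
      = ∫ x, ρ x • Complex.exp (-(@inner ℝ _ _ x w : ℝ) * Complex.I) := by
    rw [gaussMeasure]
    rw [show (fun x : EuclideanSpace ℝ (Fin d) => ENNReal.ofReal
        ((2 * Real.pi * σ ^ 2) ^ (-(d : ℝ) / 2) * Real.exp (-‖x - μ‖ ^ 2 / (2 * σ ^ 2))))
        = fun x => ((ρ x).toNNReal : ℝ≥0∞) from rfl]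
    rw [integral_withDensity_eq_integral_smul hρm]
    congr 1
    ext x
    rw [NNReal.smul_def, Real.coe_toNNReal _ (hρ0 x)]
  rw [key]
  -- translate
  rw [← integral_add_right_eq_self
    (fun x => ρ x • Complex.exp (-(@inner ℝ _ _ x w : ℝ) * Complex.I)) μ]
  have hsimp : ∀ v : EuclideanSpace ℝ (Fin d),
      ρ (v + μ) • Complex.exp (-(@inner ℝ _ _ (v + μ) w : ℝ) * Complex.I)
      = ((N : ℂ) * Complex.exp (-(@inner ℝ _ _ μ w : ℝ) * Complex.I)) *
        Complex.exp (-(1 / (2 * σ ^ 2) : ℂ) * ‖v‖ ^ 2 +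
          (-Complex.I) * (@inner ℝ _ _ w v : ℝ)) := by
    intro v
    have h1 : ρ (v + μ) = N * Real.exp (-(1 / (2 * σ ^ 2)) * ‖v‖ ^ 2) := by
      simp only [hρ, add_sub_cancel_right]
      ring_nf
    have hi : (@inner ℝ _ _ (v + μ) w : ℝ) = @inner ℝ _ _ v w + @inner ℝ _ _ μ w :=
      inner_add_left _ _ _
    have hi2 : (@inner ℝ _ _ w v : ℝ) = @inner ℝ _ _ v w := real_inner_comm v w
    rw [h1, real_smul, Complex.ofReal_mul, Complex.ofReal_exp, hi, hi2]
    push_cast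
    rw [Complex.exp_add, neg_add, add_mul, Complex.exp_add]
    rw [show -Complex.I * ((@inner ℝ _ _ v w : ℝ) : ℂ)
        = -((@inner ℝ _ _ v w : ℝ) : ℂ) * Complex.I from by ring]
    ring
  simp only [hsimp]
  rw [integral_const_mul]
  have hbre : 0 < (1 / (2 * (σ:ℂ) ^ 2)).re := by
    rw [show (1 / (2 * (σ:ℂ) ^ 2)) = (((1 : ℝ) / (2 * σ ^ 2) : ℝ) : ℂ) from by push_cast; ring,
      Complex.ofReal_re]
    positivity
  rw [GaussianFourier.integral_cexp_neg_mul_sq_norm_add hbre (-Complex.I) w]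
  have hrank : Module.finrank ℝ (EuclideanSpace ℝ (Fin d)) = d := finrank_euclideanSpace_fin
  rw [hrank]
  have hb : (Real.pi : ℂ) / (1 / (2 * σ ^ 2) : ℂ) = ((2 * Real.pi * σ ^ 2 : ℝ) : ℂ) := by
    push_cast; field_simp
  rw [hb]
  have hpow : ((2 * Real.pi * σ ^ 2 : ℝ) : ℂ) ^ ((d : ℂ) / 2)
      = (((2 * Real.pi * σ ^ 2) ^ ((d : ℝ) / 2) : ℝ) : ℂ) := by
    rw [show ((d : ℂ) / 2) = (((d : ℝ) / 2 : ℝ) : ℂ) from by push_cast; ring,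
      ← Complex.ofReal_cpow h2.le]
  rw [hpow]
  have hexp : (-Complex.I) ^ 2 * (‖w‖:ℂ) ^ 2 / (4 * (1 / (2 * σ ^ 2) : ℂ))
      = ((-(σ ^ 2 * ‖w‖ ^ 2) / 2 : ℝ) : ℂ) := by
    have : (σ:ℂ) ≠ 0 := by exact_mod_cast hσ.ne'
    push_cast
    field_simp
    linear_combination ((‖w‖:ℂ) ^ 2 * 4) * Complex.I_sq
  rw [hexp, ← Complex.ofReal_exp]
  have hNNr : N * (2 * Real.pi * σ ^ 2) ^ ((d : ℝ) / 2) = 1 := by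
    rw [hN, ← Real.rpow_add h2]
    rw [show (-(d:ℝ)/2 + (d:ℝ)/2) = 0 from by ring, Real.rpow_zero]
  have hNN : (N : ℂ) * (((2 * Real.pi * σ ^ 2) ^ ((d : ℝ) / 2) : ℝ) : ℂ) = 1 := by
    rw [← Complex.ofReal_mul, hNNr, Complex.ofReal_one]
  linear_combination (Complex.exp (-((@inner ℝ _ _ μ w : ℝ) : ℂ) * Complex.I) *
    ((Real.exp (-(σ ^ 2 * ‖w‖ ^ 2) / 2) : ℝ) : ℂ)) * hNN

lemma gaussProb (d : ℕ) (σ : ℝ) (hσ : 0 < σ) (μ : EuclideanSpace ℝ (Fin d)) :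
    IsProbabilityMeasure (gaussMeasure d σ μ) := by
  have h := gaussCF d σ hσ μ 0
  simp only [inner_zero_right, Complex.ofReal_zero, neg_zero, zero_mul, Complex.exp_zero,
    norm_zero] at h
  rw [integral_const] at h
  norm_num at h
  constructor
  rwa [measureReal_def, ENNReal.toReal_eq_one_iff] at h

lemma integrable_bdd {α : Type*} [MeasurableSpace α] {μ : Measure α} [IsFiniteMeasure μ]
    {E' : Type*} [NormedAddCommGroup E'] {f : α → E'} (hm : AEStronglyMeasurable f μ)
    {C : ℝ} (h : ∀ x, ‖f x‖ ≤ C) : Integrable f μ :=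
  (integrable_const C).mono' hm (Filter.Eventually.of_forall h)

lemma norm_cexp_imag (a : ℝ) : ‖Complex.exp (-(a : ℝ) * Complex.I)‖ = 1 := by
  simp [Complex.norm_exp]

lemma phi_continuous {d : ℕ} {ψ : EuclideanSpace ℝ (Fin d) → ℝ} (hψcont : Continuous ψ)
    {H : Type*} [NormedAddCommGroup H] [InnerProductSpace ℝ H]
    {φ : EuclideanSpace ℝ (Fin d) → H}
    (hφ : ∀ x y, @inner ℝ _ _ (φ x) (φ y) = ψ (x - y)) :
    Continuous φ := by
  have hsq : ∀ x y, ‖φ x - φ y‖ ^ 2 = 2 * ψ 0 - 2 * ψ (x - y) := by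
    intro x y
    rw [norm_sub_sq_real, ← real_inner_self_eq_norm_sq, ← real_inner_self_eq_norm_sq,
      hφ, hφ, hφ, sub_self, sub_self]
    ring
  rw [continuous_iff_continuousAt]
  intro x
  rw [ContinuousAt, tendsto_iff_dist_tendsto_zero]
  have hd : ∀ y, dist (φ y) (φ x) = Real.sqrt (2 * ψ 0 - 2 * ψ (y - x)) := by
    intro y
    rw [dist_eq_norm, ← Real.sqrt_sq (norm_nonneg _), hsq]
  simp only [hd]
  have hc : Continuous fun y : EuclideanSpace ℝ (Fin d) =>
      Real.sqrt (2 * ψ 0 - 2 * ψ (y - x)) := by fun_prop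
  have := hc.tendsto x
  simpa [sub_self] using this

lemma phi_norm {d : ℕ} {ψ : EuclideanSpace ℝ (Fin d) → ℝ}
    {H : Type*} [NormedAddCommGroup H] [InnerProductSpace ℝ H]
    {φ : EuclideanSpace ℝ (Fin d) → H}
    (hφ : ∀ x y, @inner ℝ _ _ (φ x) (φ y) = ψ (x - y)) (x : EuclideanSpace ℝ (Fin d)) :
    ‖φ x‖ = Real.sqrt (ψ 0) := by
  rw [← Real.sqrt_sq (norm_nonneg _), ← real_inner_self_eq_norm_sq, hφ, sub_self]


lemma key_inner (d : ℕ) (ψ : EuclideanSpace ℝ (Fin d) → ℝ) (hψcont : Continuous ψ)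
    (Λ : Measure (EuclideanSpace ℝ (Fin d))) [IsFiniteMeasure Λ]
    (hΛ : ∀ x, (ψ x : ℂ) =
      ((2 * Real.pi) ^ (-(d : ℝ) / 2) : ℝ) *
        ∫ w, Complex.exp (-(@inner ℝ _ _ x w : ℝ) * Complex.I) ∂Λ)
    (H : Type*) [NormedAddCommGroup H] [InnerProductSpace ℝ H] [CompleteSpace H]
    (φ : EuclideanSpace ℝ (Fin d) → H)
    (hφ : ∀ x y, @inner ℝ _ _ (φ x) (φ y) = ψ (x - y))
    (σ : ℝ) (hσ : 0 < σ) (μa μb : EuclideanSpace ℝ (Fin d)) :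
    @inner ℝ _ _ (∫ x, φ x ∂(gaussMeasure d σ μa)) (∫ x, φ x ∂(gaussMeasure d σ μb)) =
      (2 * Real.pi) ^ (-(d : ℝ) / 2) *
        ∫ w, Real.cos (@inner ℝ _ _ (μa - μb) w) * Real.exp (-(σ ^ 2 * ‖w‖ ^ 2)) ∂Λ := by
  set Ga := gaussMeasure d σ μa with hGa
  set Gb := gaussMeasure d σ μb with hGb
  haveI : IsProbabilityMeasure Ga := gaussProb d σ hσ μa
  haveI : IsProbabilityMeasure Gb := gaussProb d σ hσ μb
  have hφc : Continuous φ := phi_continuous (φ := φ) hψcont hφ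
  have hφIa : Integrable φ Ga :=
    integrable_bdd hφc.aestronglyMeasurable (fun x => (phi_norm (φ := φ) (ψ := ψ) hφ x).le)
  have hφIb : Integrable φ Gb :=
    integrable_bdd hφc.aestronglyMeasurable (fun x => (phi_norm (φ := φ) (ψ := ψ) hφ x).le)
  set C : ℝ := (2 * Real.pi) ^ (-(d : ℝ) / 2) with hC
  -- Step 1: double integral
  have h1 : @inner ℝ _ _ (∫ x, φ x ∂Ga) (∫ x, φ x ∂Gb)
      = ∫ x, ∫ y, ψ (x - y) ∂Gb ∂Ga := by
    rw [real_inner_comm, ← integral_inner hφIa]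
    refine integral_congr_ae (Filter.Eventually.of_forall fun x => ?_)
    dsimp only
    rw [real_inner_comm, ← integral_inner hφIb]
    simp only [hφ]
  -- Step 2: inner integral identity
  have hinner : ∀ x : EuclideanSpace ℝ (Fin d), ∫ y, (ψ (x - y) : ℂ) ∂Gb
      = (C : ℂ) * ∫ w, Complex.exp (-(@inner ℝ _ _ x w : ℝ) * Complex.I) *
          (Complex.exp ((@inner ℝ _ _ μb w : ℝ) * Complex.I) *
            (Real.exp (-(σ ^ 2 * ‖w‖ ^ 2) / 2) : ℝ)) ∂Λ := by
    intro x
    simp only [hΛ]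
    rw [integral_const_mul]
    congr 1
    have hsplit : ∀ y w : EuclideanSpace ℝ (Fin d), Complex.exp (-(@inner ℝ _ _ (x - y) w : ℝ) * Complex.I)
        = Complex.exp (-(@inner ℝ _ _ x w : ℝ) * Complex.I) *
          Complex.exp (-(@inner ℝ _ _ y (-w) : ℝ) * Complex.I) := by
      intro y w
      rw [← Complex.exp_add]
      congr 1
      rw [inner_sub_left, inner_neg_right]
      push_cast
      ring
    have hInt1 : Integrable (Function.uncurry fun y w : EuclideanSpace ℝ (Fin d) =>
        Complex.exp (-(@inner ℝ _ _ (x - y) w : ℝ) * Complex.I)) (Gb.prod Λ) := by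
      refine integrable_bdd ?_ (C := 1) ?_
      · have hcont : Continuous fun p : EuclideanSpace ℝ (Fin d) × EuclideanSpace ℝ (Fin d) =>
            Complex.exp (-(@inner ℝ _ _ (x - p.1) p.2 : ℝ) * Complex.I) := by
          have h0 : Continuous fun p : EuclideanSpace ℝ (Fin d) × EuclideanSpace ℝ (Fin d) => (@inner ℝ _ _ (x - p.1) p.2 : ℝ) :=
            continuous_inner.comp ((continuous_const.sub continuous_fst).prodMk continuous_snd)
          exact Complex.continuous_exp.comp
            ((Complex.continuous_ofReal.comp h0).neg.mul continuous_const)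
        exact hcont.aestronglyMeasurable
      · intro p
        exact (norm_cexp_imag _).le
    rw [integral_integral_swap hInt1]
    refine integral_congr_ae (Filter.Eventually.of_forall fun w => ?_)
    simp only [hsplit]
    rw [integral_const_mul, hGb, gaussCF d σ hσ μb (-w)]
    rw [inner_neg_right, norm_neg]
    push_cast
    ring_nf
  -- Step 3: full complex computation
  have h2 : ((∫ x, ∫ y, ψ (x - y) ∂Gb ∂Ga : ℝ) : ℂ)
      = (C : ℂ) * ∫ w, Complex.exp (-(@inner ℝ _ _ (μa - μb) w : ℝ) * Complex.I) *
          (Real.exp (-(σ ^ 2 * ‖w‖ ^ 2)) : ℝ) ∂Λ := by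
    have hco : ((∫ x, ∫ y, ψ (x - y) ∂Gb ∂Ga : ℝ) : ℂ)
        = ∫ x, ((∫ y, ψ (x - y) ∂Gb : ℝ) : ℂ) ∂Ga := (integral_ofReal).symm
    have hco2 : ∀ x : EuclideanSpace ℝ (Fin d),
        ((∫ y, ψ (x - y) ∂Gb : ℝ) : ℂ) = ∫ y, (ψ (x - y) : ℂ) ∂Gb := fun x =>
      (integral_ofReal).symm
    rw [hco]
    simp only [hco2, hinner]
    rw [integral_const_mul]
    congr 1
    have hInt2 : Integrable (Function.uncurry fun x w : EuclideanSpace ℝ (Fin d) =>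
        Complex.exp (-(@inner ℝ _ _ x w : ℝ) * Complex.I) *
          (Complex.exp ((@inner ℝ _ _ μb w : ℝ) * Complex.I) *
            (Real.exp (-(σ ^ 2 * ‖w‖ ^ 2) / 2) : ℝ))) (Ga.prod Λ) := by
      refine integrable_bdd ?_ (C := 1) ?_
      · have h0 : Continuous fun p : EuclideanSpace ℝ (Fin d) × EuclideanSpace ℝ (Fin d) => (@inner ℝ _ _ p.1 p.2 : ℝ) := continuous_inner
        have h1 : Continuous fun p : EuclideanSpace ℝ (Fin d) × EuclideanSpace ℝ (Fin d) => (@inner ℝ _ _ μb p.2 : ℝ) :=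
          continuous_inner.comp (continuous_const.prodMk continuous_snd)
        apply Continuous.aestronglyMeasurable
        apply Continuous.mul
        · exact Complex.continuous_exp.comp
            ((Complex.continuous_ofReal.comp h0).neg.mul continuous_const)
        apply Continuous.mul
        · exact Complex.continuous_exp.comp
            ((Complex.continuous_ofReal.comp h1).mul continuous_const)
        · exact Complex.continuous_ofReal.comp (by fun_prop)
      · intro p
        dsimp only [Function.uncurry]
        rw [norm_mul, norm_mul, norm_cexp_imag]
        have h3 : ‖Complex.exp ((@inner ℝ _ _ μb p.2 : ℝ) * Complex.I)‖ = 1 := by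
          have := norm_cexp_imag (-(@inner ℝ _ _ μb p.2 : ℝ))
          push_cast at this
          rw [neg_neg] at this
          exact this
        rw [h3]
        simp only [one_mul, Complex.norm_real, Real.norm_eq_abs,
          Real.abs_exp]
        apply Real.exp_le_one_iff.mpr
        have h4 : (0:ℝ) ≤ σ ^ 2 * ‖p.2‖ ^ 2 := by positivity
        linarith
    rw [integral_integral_swap hInt2]
    refine integral_congr_ae (Filter.Eventually.of_forall fun w => ?_)
    dsimp only [Function.uncurry]
    rw [integral_mul_const, hGa, gaussCF d σ hσ μa w]
    have harg : (-(@inner ℝ _ _ μa w : ℝ) * Complex.I) +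
        ((@inner ℝ _ _ μb w : ℝ) * Complex.I) = -(@inner ℝ _ _ (μa - μb) w : ℝ) * Complex.I := by
      rw [inner_sub_left]; push_cast; ring
    calc Complex.exp (-(@inner ℝ _ _ μa w : ℝ) * Complex.I) *
          (Real.exp (-(σ ^ 2 * ‖w‖ ^ 2) / 2) : ℝ) *
          (Complex.exp ((@inner ℝ _ _ μb w : ℝ) * Complex.I) *
            (Real.exp (-(σ ^ 2 * ‖w‖ ^ 2) / 2) : ℝ))
        = (Complex.exp (-(@inner ℝ _ _ μa w : ℝ) * Complex.I) *
            Complex.exp ((@inner ℝ _ _ μb w : ℝ) * Complex.I)) *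
          ((Real.exp (-(σ ^ 2 * ‖w‖ ^ 2) / 2) : ℝ) *
            (Real.exp (-(σ ^ 2 * ‖w‖ ^ 2) / 2) : ℝ)) := by ring
      _ = Complex.exp (-(@inner ℝ _ _ (μa - μb) w : ℝ) * Complex.I) *
          (Real.exp (-(σ ^ 2 * ‖w‖ ^ 2)) : ℝ) := by
          rw [← Complex.exp_add, harg, ← Complex.ofReal_mul, ← Real.exp_add]
          norm_num
  -- Step 4: take real parts
  have hIntRe : Integrable (fun w => Complex.exp (-(@inner ℝ _ _ (μa - μb) w : ℝ) * Complex.I) *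
      (Real.exp (-(σ ^ 2 * ‖w‖ ^ 2)) : ℝ)) Λ := by
    refine integrable_bdd ?_ (C := 1) ?_
    · apply Continuous.aestronglyMeasurable
      apply Continuous.mul
      · exact Complex.continuous_exp.comp
          ((Complex.continuous_ofReal.comp (continuous_inner.comp
            (continuous_const.prodMk continuous_id))).neg.mul continuous_const)
      · exact Complex.continuous_ofReal.comp (by fun_prop)
    · intro w
      rw [norm_mul, norm_cexp_imag]
      simp only [one_mul, Complex.norm_real, Real.norm_eq_abs, Real.abs_exp]
      apply Real.exp_le_one_iff.mpr
      have h4 : (0:ℝ) ≤ σ ^ 2 * ‖w‖ ^ 2 := by positivity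
      linarith
  have hre : ∀ (a e : ℝ), (Complex.exp (-(a : ℝ) * Complex.I) * (e : ℂ)).re
      = Real.cos a * e := by
    intro a e
    rw [show -(a : ℂ) * Complex.I = ((-a : ℝ) : ℂ) * Complex.I from by push_cast; ring]
    rw [Complex.mul_re, Complex.exp_ofReal_mul_I_re]
    simp [Real.cos_neg]
  rw [h1, show (∫ x, ∫ y, ψ (x - y) ∂Gb ∂Ga : ℝ)
      = ((∫ x, ∫ y, ψ (x - y) ∂Gb ∂Ga : ℝ) : ℂ).re from (Complex.ofReal_re _).symm, h2]
  rw [show ((C : ℂ) * ∫ w, Complex.exp (-(@inner ℝ _ _ (μa - μb) w : ℝ) * Complex.I) *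
      (Real.exp (-(σ ^ 2 * ‖w‖ ^ 2)) : ℝ) ∂Λ).re
      = C * (∫ w, Complex.exp (-(@inner ℝ _ _ (μa - μb) w : ℝ) * Complex.I) *
      (Real.exp (-(σ ^ 2 * ‖w‖ ^ 2)) : ℝ) ∂Λ).re from Complex.re_ofReal_mul _ _]
  congr 1
  have hreInt : (∫ w, Complex.exp (-(@inner ℝ _ _ (μa - μb) w : ℝ) * Complex.I) *
      (Real.exp (-(σ ^ 2 * ‖w‖ ^ 2)) : ℝ) ∂Λ).re
      = ∫ w, (Complex.exp (-(@inner ℝ _ _ (μa - μb) w : ℝ) * Complex.I) *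
      ((Real.exp (-(σ ^ 2 * ‖w‖ ^ 2)) : ℝ) : ℂ)).re ∂Λ := (integral_re hIntRe).symm
  rw [hreInt]
  refine integral_congr_ae (Filter.Eventually.of_forall fun w => ?_)
  exact hre _ _

/-- For a translation invariant kernel k(x,y) = ψ(x-y) with ψ ∈ C_b(ℝ^d)
positive definite and (symmetric) Bochner measure Λ_ψ, the inner product of
the kernel mean embeddings of N(μ₀,σ²I) and N(μ₁,σ²I) is
(2π)^{-d/2} ∫ cos⟨μ₀-μ₁,w⟩ e^{-σ²‖w‖²} dΛ_ψ(w), and consequently the squared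
RKHS distance is 2(2π)^{-d/2} ∫ e^{-σ²‖w‖²}(1 - cos⟨μ₀-μ₁,w⟩) dΛ_ψ(w). -/
theorem rkhs_gaussian_embeddings_translation_invariant (d : ℕ)
    (ψ : EuclideanSpace ℝ (Fin d) → ℝ)
    (hψcont : Continuous ψ) (hψbdd : ∃ C, ∀ z, |ψ z| ≤ C)
    (Λ : Measure (EuclideanSpace ℝ (Fin d))) [IsFiniteMeasure Λ]
    (hΛsymm : Λ.map (fun w => -w) = Λ)
    (hΛ : ∀ x, (ψ x : ℂ) =
      ((2 * Real.pi) ^ (-(d : ℝ) / 2) : ℝ) *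
        ∫ w, Complex.exp (-(@inner ℝ _ _ x w : ℝ) * Complex.I) ∂Λ)
    (H : Type*) [NormedAddCommGroup H] [InnerProductSpace ℝ H] [CompleteSpace H]
    (φ : EuclideanSpace ℝ (Fin d) → H)
    (hφ : ∀ x y, @inner ℝ _ _ (φ x) (φ y) = ψ (x - y))
    (μ₀ μ₁ : EuclideanSpace ℝ (Fin d)) (σ : ℝ) (hσ : 0 < σ)
    (G₀ G₁ : Measure (EuclideanSpace ℝ (Fin d)))
    (hG₀ : G₀ = (volume : Measure (EuclideanSpace ℝ (Fin d))).withDensity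
      (fun x => ENNReal.ofReal ((2 * Real.pi * σ ^ 2) ^ (-(d : ℝ) / 2) *
        Real.exp (-‖x - μ₀‖ ^ 2 / (2 * σ ^ 2)))))
    (hG₁ : G₁ = (volume : Measure (EuclideanSpace ℝ (Fin d))).withDensity
      (fun x => ENNReal.ofReal ((2 * Real.pi * σ ^ 2) ^ (-(d : ℝ) / 2) *
        Real.exp (-‖x - μ₁‖ ^ 2 / (2 * σ ^ 2))))) :
    @inner ℝ _ _ (∫ x, φ x ∂G₀) (∫ x, φ x ∂G₁) =
      (2 * Real.pi) ^ (-(d : ℝ) / 2) *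
        ∫ w, Real.cos (@inner ℝ _ _ (μ₀ - μ₁) w) *
          Real.exp (-(σ ^ 2 * ‖w‖ ^ 2)) ∂Λ ∧
    ‖(∫ x, φ x ∂G₀) - ∫ x, φ x ∂G₁‖ ^ 2 =
      2 * (2 * Real.pi) ^ (-(d : ℝ) / 2) *
        ∫ w, Real.exp (-(σ ^ 2 * ‖w‖ ^ 2)) *
          (1 - Real.cos (@inner ℝ _ _ (μ₀ - μ₁) w)) ∂Λ := by
  have hG₀' : G₀ = gaussMeasure d σ μ₀ := hG₀
  have hG₁' : G₁ = gaussMeasure d σ μ₁ := hG₁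
  subst hG₀' hG₁'
  set C : ℝ := (2 * Real.pi) ^ (-(d : ℝ) / 2) with hC
  have k01 := key_inner d ψ hψcont Λ hΛ H φ hφ σ hσ μ₀ μ₁
  have k00 := key_inner d ψ hψcont Λ hΛ H φ hφ σ hσ μ₀ μ₀
  have k11 := key_inner d ψ hψcont Λ hΛ H φ hφ σ hσ μ₁ μ₁
  have e0 : ∀ μ : EuclideanSpace ℝ (Fin d),
      (∫ w, Real.cos (@inner ℝ _ _ (μ - μ) w) * Real.exp (-(σ ^ 2 * ‖w‖ ^ 2)) ∂Λ)
        = ∫ w, Real.exp (-(σ ^ 2 * ‖w‖ ^ 2)) ∂Λ := by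
    intro μ
    refine integral_congr_ae (Filter.Eventually.of_forall fun w => ?_)
    simp [sub_self]
  rw [e0] at k00 k11
  refine ⟨k01, ?_⟩
  have hc1 : Continuous fun w : EuclideanSpace ℝ (Fin d) => (@inner ℝ _ _ (μ₀ - μ₁) w : ℝ) :=
    Continuous.inner continuous_const continuous_id
  have hexple : ∀ w : EuclideanSpace ℝ (Fin d), Real.exp (-(σ ^ 2 * ‖w‖ ^ 2)) ≤ 1 := by
    intro w
    apply Real.exp_le_one_iff.mpr
    have : (0:ℝ) ≤ σ ^ 2 * ‖w‖ ^ 2 := by positivity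
    linarith
  have hE : Integrable (fun w => Real.exp (-(σ ^ 2 * ‖w‖ ^ 2))) Λ := by
    refine integrable_bdd (Continuous.aestronglyMeasurable (by fun_prop)) (C := 1) fun w => ?_
    rw [Real.norm_eq_abs, Real.abs_exp]
    exact hexple w
  have hCE : Integrable (fun w => Real.cos (@inner ℝ _ _ (μ₀ - μ₁) w) *
      Real.exp (-(σ ^ 2 * ‖w‖ ^ 2))) Λ := by
    refine integrable_bdd (Continuous.aestronglyMeasurable
      ((Real.continuous_cos.comp hc1).mul (by fun_prop))) (C := 1) fun w => ?_
    rw [Real.norm_eq_abs, abs_mul]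
    refine mul_le_one₀ (Real.abs_cos_le_one _) (abs_nonneg _) ?_
    rw [Real.abs_exp]
    exact hexple w
  have hsub : ∫ w, Real.exp (-(σ ^ 2 * ‖w‖ ^ 2)) *
      (1 - Real.cos (@inner ℝ _ _ (μ₀ - μ₁) w)) ∂Λ
      = (∫ w, Real.exp (-(σ ^ 2 * ‖w‖ ^ 2)) ∂Λ) -
        ∫ w, Real.cos (@inner ℝ _ _ (μ₀ - μ₁) w) * Real.exp (-(σ ^ 2 * ‖w‖ ^ 2)) ∂Λ := by
    rw [← integral_sub hE hCE]
    refine integral_congr_ae (Filter.Eventually.of_forall fun w => ?_)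
    ring
  calc ‖(∫ x, φ x ∂(gaussMeasure d σ μ₀)) - ∫ x, φ x ∂(gaussMeasure d σ μ₁)‖ ^ 2
      = ‖∫ x, φ x ∂(gaussMeasure d σ μ₀)‖ ^ 2 -
        2 * @inner ℝ _ _ (∫ x, φ x ∂(gaussMeasure d σ μ₀)) (∫ x, φ x ∂(gaussMeasure d σ μ₁)) +
        ‖∫ x, φ x ∂(gaussMeasure d σ μ₁)‖ ^ 2 := norm_sub_sq_real _ _
    _ = (C * ∫ w, Real.exp (-(σ ^ 2 * ‖w‖ ^ 2)) ∂Λ) -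
        2 * (C * ∫ w, Real.cos (@inner ℝ _ _ (μ₀ - μ₁) w) *
          Real.exp (-(σ ^ 2 * ‖w‖ ^ 2)) ∂Λ) +
        (C * ∫ w, Real.exp (-(σ ^ 2 * ‖w‖ ^ 2)) ∂Λ) := by
        rw [← real_inner_self_eq_norm_sq, ← real_inner_self_eq_norm_sq, k00, k11, k01]
    _ = 2 * C * ∫ w, Real.exp (-(σ ^ 2 * ‖w‖ ^ 2)) *
          (1 - Real.cos (@inner ℝ _ _ (μ₀ - μ₁) w)) ∂Λ := by
        rw [hsub]; ring
end
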